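/- arXiv:2107.10055 — 4 statements merged into one kernel-verified Lean document; each statement's English description precedes it below -/
import Mathlib

section
/- (Minty) Let A : H ⇉ H be a monotone set-valued operator on a real Hilbert space. Then A is maximally monotone if and only if the range of Id + A is all of H. -/
variable {H : Type*} [NormedAddCommGroup H] [InnerProductSpace ℝ H]

/-- A set `G ⊆ H × H` (the graph of a set-valued operator) is monotone. -/
def IsMonotoneSet (G : Set (H × H)) : Prop :=
  ∀ p ∈ G, ∀ q ∈ G, (inner ℝ (p.2 - q.2) (p.1 - q.1) : ℝ) ≥ 0

/-- A set `G ⊆ H × H` is maximally monotone. -/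
def IsMaxMonotoneSet (G : Set (H × H)) : Prop :=
  IsMonotoneSet G ∧ ∀ G' : Set (H × H), IsMonotoneSet G' → G ⊆ G' → G' = G

open RealInnerProductSpace Finset Metric


lemma minty_aux_sym {ι : Type*} [Fintype ι] (x y : ι → H) (l : ι → ℝ)
    (mono : ∀ i j, 0 ≤ ⟪y i - y j, x i - x j⟫) (hl : ∀ i, 0 ≤ l i) :
    ∑ i, ∑ j, l i * l j * ⟪y i, x j - x i⟫ ≤ 0 := by
  have hswap : ∑ i, ∑ j, l i * l j * ⟪y i, x j - x i⟫
      = ∑ i, ∑ j, l j * l i * ⟪y j, x i - x j⟫ := Finset.sum_comm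
  have h2 : (∑ i, ∑ j, l i * l j * ⟪y i, x j - x i⟫)
        + (∑ i, ∑ j, l i * l j * ⟪y i, x j - x i⟫)
      = ∑ i, ∑ j, -(l i * l j * ⟪y i - y j, x i - x j⟫) := by
    nth_rewrite 2 [hswap]
    rw [← Finset.sum_add_distrib]
    refine Finset.sum_congr rfl fun i _ => ?_
    rw [← Finset.sum_add_distrib]
    refine Finset.sum_congr rfl fun j _ => ?_
    simp only [inner_sub_left, inner_sub_right]
    ring
  have hnn : ∑ i, ∑ j, -(l i * l j * ⟪y i - y j, x i - x j⟫) ≤ 0 := by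
    apply Finset.sum_nonpos; intro i _
    apply Finset.sum_nonpos; intro j _
    simp only [neg_nonpos]
    exact mul_nonneg (mul_nonneg (hl i) (hl j)) (mono i j)
  linarith


lemma minty_finite {ι : Type*} [Fintype ι] [Nonempty ι] (x y : ι → H) (z : H)
    (mono : ∀ i j, 0 ≤ ⟪y i - y j, x i - x j⟫) :
    ∃ w : H, ∀ i, 0 ≤ ⟪z - w - y i, w - x i⟫ := by
  classical
  set c : ι → H := fun i => (2:ℝ)⁻¹ • (x i + z - y i) with hc
  set q : ι → ℝ := fun i => ⟪z - y i, x i⟫ with hq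
  have key : ∀ (u : H) (i : ι), ⟪z - u - y i, u - x i⟫ = 2*⟪u, c i⟫ - ‖u‖^2 - q i := by
    intro u i
    have h1 : (2:ℝ)*⟪u, c i⟫ = ⟪u, x i + z - y i⟫ := by
      rw [hc]; simp only [real_inner_smul_right]; ring
    rw [h1, hq, ← real_inner_self_eq_norm_sq]
    simp only [inner_sub_left, inner_sub_right, inner_add_left, inner_add_right]
    rw [real_inner_comm z u, real_inner_comm (y i) u]
    ring
  have hcont : Continuous (fun m : ι → ℝ => ‖∑ i, m i • c i‖^2 - ∑ i, m i * q i) := by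
    apply Continuous.sub
    · exact ((continuous_finset_sum _ fun i _ => (continuous_apply i).smul continuous_const).norm).pow 2
    · exact continuous_finset_sum _ fun i _ => (continuous_apply i).mul continuous_const
  obtain ⟨l, hlmem, hmin⟩ := (isCompact_stdSimplex ℝ ι).exists_isMinOn
    ⟨_, single_mem_stdSimplex ℝ (Classical.arbitrary ι)⟩ hcont.continuousOn
  have hl0 : ∀ i, 0 ≤ l i := hlmem.1
  have hl1 : ∑ i, l i = 1 := hlmem.2
  set w : H := ∑ i, l i • c i with hw
  set u : H := ∑ i, l i • x i with hu
  set Q : ℝ := ∑ i, l i * q i with hQ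
  have hopt : ∀ m ∈ stdSimplex ℝ ι, ‖w‖^2 - Q ≤ ‖∑ i, m i • c i‖^2 - ∑ i, m i * q i :=
    fun m hm => hmin hm
  -- linearity computations
  have hsum_inner : ∀ v : H, ∑ i, l i * ⟪v, c i⟫ = ⟪v, w⟫ := by
    intro v
    rw [hw, inner_sum]
    exact Finset.sum_congr rfl fun i _ => (real_inner_smul_right v (c i) (l i)).symm
  have hguw : ∑ i, l i * ⟪z - u - y i, u - x i⟫ = 2*⟪u,w⟫ - ‖u‖^2 - Q := by
    have e : ∀ i, l i * ⟪z - u - y i, u - x i⟫ = 2*(l i * ⟪u, c i⟫) - l i * ‖u‖^2 - l i * q i := by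
      intro i; rw [key u i]; ring
    rw [Finset.sum_congr rfl fun i _ => e i]
    rw [Finset.sum_sub_distrib, Finset.sum_sub_distrib, ← Finset.mul_sum, hsum_inner,
      ← Finset.sum_mul, hl1, hQ]
    ring
  have hgu_nonneg : 0 ≤ ∑ i, l i * ⟪z - u - y i, u - x i⟫ := by
    have hsplit : ∀ i, l i * ⟪z - u - y i, u - x i⟫
        = l i * ⟪z - u, u - x i⟫ - l i * ⟪y i, u - x i⟫ := by
      intro i
      have e : z - u - y i = (z - u) - y i := by abel
      rw [e, inner_sub_left]; ring
    rw [Finset.sum_congr rfl fun i _ => hsplit i, Finset.sum_sub_distrib]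
    have h1 : ∑ i, l i * ⟪z - u, u - x i⟫ = 0 := by
      have e : ∀ i, l i * ⟪z - u, u - x i⟫ = ⟪z - u, l i • (u - x i)⟫ := fun i =>
        (real_inner_smul_right _ _ _).symm
      rw [Finset.sum_congr rfl fun i _ => e i, ← inner_sum]
      have e2 : ∑ i, l i • (u - x i) = 0 := by
        simp only [smul_sub, Finset.sum_sub_distrib, ← Finset.sum_smul, hl1, one_smul, ← hu,
          sub_self]
      rw [e2, inner_zero_right]
    have h2 : ∑ i, l i * ⟪y i, u - x i⟫ ≤ 0 := by
      have e : ∀ i, l i * ⟪y i, u - x i⟫ = ∑ j, l i * l j * ⟪y i, x j - x i⟫ := by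
        intro i
        have husub : u - x i = ∑ j, l j • (x j - x i) := by
          simp only [smul_sub, Finset.sum_sub_distrib, ← Finset.sum_smul, hl1, one_smul, ← hu]
        rw [husub, inner_sum, Finset.mul_sum]
        exact Finset.sum_congr rfl fun j _ => by rw [real_inner_smul_right]; ring
      rw [Finset.sum_congr rfl fun i _ => e i]
      exact minty_aux_sym x y l mono hl0
    linarith
  have h0 : 0 ≤ ‖w‖^2 - Q := by
    have hid := norm_sub_sq_real u w
    nlinarith [sq_nonneg ‖u - w‖, hgu_nonneg, hguw, hid]
  refine ⟨w, fun j => ?_⟩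
  rw [key w j]
  have hD : 0 ≤ 2*⟪w, c j⟫ - 2*‖w‖^2 + Q - q j := by
    set D : ℝ := 2*⟪w, c j⟫ - 2*‖w‖^2 + Q - q j with hDdef
    set E : ℝ := ‖c j - w‖^2 with hE
    have hkey : ∀ t : ℝ, 0 < t → t ≤ 1 → 0 ≤ t * D + t^2 * E := by
      intro t ht0 ht1
      have hltmem : ((1-t) • l + t • (Pi.single j 1 : ι → ℝ)) ∈ stdSimplex ℝ ι :=
        (convex_stdSimplex ℝ ι) hlmem (single_mem_stdSimplex ℝ j)
          (by linarith) ht0.le (by ring)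
      have hsingle_c : ∑ i, (Pi.single j 1 : ι → ℝ) i • c i = c j := by
        simp [Pi.single_apply, ite_smul]
      have hsingle_q : ∑ i, (Pi.single j 1 : ι → ℝ) i * q i = q j := by
        simp [Pi.single_apply, ite_mul]
      have hsum1 : ∑ i, ((1-t) • l + t • (Pi.single j 1 : ι → ℝ)) i • c i
          = w + t • (c j - w) := by
        simp only [Pi.add_apply, Pi.smul_apply, smul_eq_mul, add_smul, mul_smul,
          Finset.sum_add_distrib, ← Finset.smul_sum, ← hw, hsingle_c]
        module
      have hsum2 : ∑ i, ((1-t) • l + t • (Pi.single j 1 : ι → ℝ)) i * q i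
          = (1-t) * Q + t * q j := by
        simp only [Pi.add_apply, Pi.smul_apply, smul_eq_mul, add_mul, mul_assoc,
          Finset.sum_add_distrib, ← Finset.mul_sum, ← hQ, hsingle_q]
      have h2 := hopt _ hltmem
      rw [hsum1, hsum2] at h2
      have hnorm : ‖w + t • (c j - w)‖^2
          = ‖w‖^2 + 2*(t*(⟪w, c j⟫ - ‖w‖^2)) + t^2 * ‖c j - w‖^2 := by
        rw [norm_add_sq_real, real_inner_smul_right, inner_sub_right,
          real_inner_self_eq_norm_sq, norm_smul, Real.norm_eq_abs, mul_pow, sq_abs]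
      rw [hnorm] at h2
      rw [hDdef, hE]
      nlinarith [h2]
    have hstep : ∀ ε : ℝ, 0 < ε → -D ≤ 0 + ε := by
      intro ε hε
      have hEnn : 0 ≤ E := sq_nonneg _
      rcases eq_or_lt_of_le hEnn with hE0 | hE0
      · have h := hkey 1 one_pos le_rfl
        nlinarith
      · set t := min 1 (ε / E) with ht
        have ht0 : 0 < t := lt_min one_pos (div_pos hε hE0)
        have ht1 : t ≤ 1 := min_le_left _ _
        have h := hkey t ht0 ht1
        have htE : t * E ≤ ε := by
          rw [ht]
          calc min 1 (ε / E) * E ≤ (ε / E) * E :=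
                mul_le_mul_of_nonneg_right (min_le_right _ _) hE0.le
            _ = ε := by field_simp
        nlinarith
    have := le_of_forall_pos_le_add hstep
    linarith
  linarith


lemma minty_ball_key (a b u : H) :
    (⟪a - u, u - b⟫ : ℝ) = (‖a - b‖/2)^2 - ‖u - (2:ℝ)⁻¹ • (b + a)‖^2 := by
  have h1 : ‖u - (2:ℝ)⁻¹ • (b + a)‖^2
      = ‖u‖^2 - 2*⟪u, (2:ℝ)⁻¹ • (b + a)⟫ + ‖(2:ℝ)⁻¹ • (b + a)‖^2 :=
    norm_sub_sq_real u _
  have h2 : ‖(2:ℝ)⁻¹ • (b + a)‖^2 = (‖b + a‖^2)/4 := by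
    rw [norm_smul, Real.norm_eq_abs, mul_pow, sq_abs]; ring
  have h3 : ‖b + a‖^2 = ‖b‖^2 + 2*⟪b,a⟫ + ‖a‖^2 := norm_add_sq_real b a
  have h4 : ‖a - b‖^2 = ‖a‖^2 - 2*⟪a,b⟫ + ‖b‖^2 := norm_sub_sq_real a b
  have h5 : (2:ℝ)*⟪u, (2:ℝ)⁻¹ • (b + a)⟫ = ⟪u, b⟫ + ⟪u, a⟫ := by
    rw [real_inner_smul_right, inner_add_right]; ring
  have h6 : (⟪a - u, u - b⟫ : ℝ) = ⟪u,a⟫ - ⟪a,b⟫ - ‖u‖^2 + ⟪u,b⟫ := by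
    simp only [inner_sub_left, inner_sub_right, ← real_inner_self_eq_norm_sq]
    rw [real_inner_comm a u]
    ring
  have h7 : (‖a - b‖/2)^2 = ‖a - b‖^2/4 := by ring
  have h8 : (⟪a,b⟫:ℝ) = ⟪b,a⟫ := (real_inner_comm a b).symm
  linarith

def mintyBall (z : H) (p : H × H) : Set H := {u : H | (0:ℝ) ≤ inner ℝ (z - u - p.2) (u - p.1)}

lemma mintyBall_eq (z : H) (p : H × H) :
    mintyBall z p
      = closedBall ((2:ℝ)⁻¹ • (p.1 + (z - p.2))) (‖(z - p.2) - p.1‖/2) := by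
  ext u
  simp only [mintyBall, Set.mem_setOf_eq, mem_closedBall, dist_eq_norm]
  have e : z - u - p.2 = (z - p.2) - u := by abel
  rw [e, minty_ball_key (z - p.2) p.1 u]
  constructor
  · intro h
    have h2 : ‖u - (2:ℝ)⁻¹ • (p.1 + (z - p.2))‖^2 ≤ (‖(z - p.2) - p.1‖/2)^2 := by linarith
    have h3 := Real.sqrt_le_sqrt h2
    rwa [Real.sqrt_sq (norm_nonneg _), Real.sqrt_sq (by positivity)] at h3
  · intro h
    have h2 : ‖u - (2:ℝ)⁻¹ • (p.1 + (z - p.2))‖^2 ≤ (‖(z - p.2) - p.1‖/2)^2 := by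
      have := norm_nonneg (u - (2:ℝ)⁻¹ • (p.1 + (z - p.2)))
      nlinarith
    linarith

lemma mintyBall_closed (z : H) (p : H × H) : IsClosed (mintyBall z p) := by
  rw [mintyBall_eq]; exact isClosed_closedBall

lemma mintyBall_convex (z : H) (p : H × H) : Convex ℝ (mintyBall z p) := by
  rw [mintyBall_eq]; exact convex_closedBall _ _

lemma mintyBall_bound (z : H) (p : H × H) {u : H} (hu : u ∈ mintyBall z p) :
    ‖u‖ ≤ ‖(2:ℝ)⁻¹ • (p.1 + (z - p.2))‖ + ‖(z - p.2) - p.1‖/2 := by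
  rw [mintyBall_eq] at hu
  rw [mem_closedBall, dist_eq_norm] at hu
  calc ‖u‖ = ‖(u - (2:ℝ)⁻¹ • (p.1 + (z - p.2))) + (2:ℝ)⁻¹ • (p.1 + (z - p.2))‖ := by
        congr 1; abel
    _ ≤ ‖u - (2:ℝ)⁻¹ • (p.1 + (z - p.2))‖ + ‖(2:ℝ)⁻¹ • (p.1 + (z - p.2))‖ := norm_add_le _ _
    _ ≤ ‖(2:ℝ)⁻¹ • (p.1 + (z - p.2))‖ + ‖(z - p.2) - p.1‖/2 := by linarith

def mintyCap (z : H) (F : Finset (H × H)) : Set H := ⋂ p ∈ F, mintyBall z p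

lemma mintyCap_closed (z : H) (F : Finset (H × H)) : IsClosed (mintyCap z F) :=
  isClosed_biInter fun p _ => mintyBall_closed z p

lemma mintyCap_convex (z : H) (F : Finset (H × H)) : Convex ℝ (mintyCap z F) :=
  convex_iInter fun p => convex_iInter fun _ => mintyBall_convex z p

lemma mintyCap_anti (z : H) {F F' : Finset (H × H)} (h : F ⊆ F') :
    mintyCap z F' ⊆ mintyCap z F := by
  intro u hu
  simp only [mintyCap, Set.mem_iInter] at hu ⊢
  exact fun p hp => hu p (h hp)

lemma mintyCap_subset_ball (z : H) {F : Finset (H × H)} {p : H × H} (hp : p ∈ F) :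
    mintyCap z F ⊆ mintyBall z p := by
  intro u hu
  simp only [mintyCap, Set.mem_iInter] at hu
  exact hu p hp

lemma minty_proj [CompleteSpace H] {K : Set H} (hne : K.Nonempty) (hcl : IsClosed K)
    (hconv : Convex ℝ K) : ∃ v ∈ K, ‖v‖ = infDist 0 K := by
  obtain ⟨v, hv, he⟩ := exists_norm_eq_iInf_of_complete_convex hne hcl.isComplete hconv 0
  refine ⟨v, hv, ?_⟩
  rw [Metric.infDist_eq_iInf]
  rw [zero_sub, norm_neg] at he
  rw [he]
  congr 1
  ext w
  rw [dist_eq_norm, zero_sub, norm_neg]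


lemma mintyCap_nonempty (z : H) {G : Set (H × H)} (hG : IsMonotoneSet G)
    {F : Finset (H × H)} (hFG : ↑F ⊆ G) (hFne : F.Nonempty) :
    (mintyCap z F).Nonempty := by
  classical
  haveI : Nonempty {p // p ∈ F} := ⟨⟨hFne.choose, hFne.choose_spec⟩⟩
  obtain ⟨w, hw⟩ := minty_finite (fun i : {p // p ∈ F} => (i : H × H).1)
    (fun i : {p // p ∈ F} => (i : H × H).2) z
    (fun i j => hG _ (hFG i.2) _ (hFG j.2))
  refine ⟨w, ?_⟩
  simp only [mintyCap, Set.mem_iInter]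
  intro p hp
  exact hw ⟨p, hp⟩

lemma minty_inter [CompleteSpace H] {G : Set (H × H)} (hG : IsMonotoneSet G)
    (hGne : G.Nonempty) (z : H) :
    ∃ w : H, ∀ p ∈ G, (0:ℝ) ≤ inner ℝ (z - w - p.2) (w - p.1) := by
  classical
  obtain ⟨p₀, hp₀⟩ := hGne
  -- the admissible family and the sup of distances
  set D : Set ℝ := (fun F => infDist 0 (mintyCap z F)) ''
    {F : Finset (H × H) | ↑F ⊆ G ∧ p₀ ∈ F} with hD
  have hadm0 : ({p₀} : Finset (H × H)) ∈ {F : Finset (H × H) | ↑F ⊆ G ∧ p₀ ∈ F} := by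
    simp [hp₀]
  have hDne : D.Nonempty := ⟨_, Set.mem_image_of_mem _ hadm0⟩
  have hDbdd : BddAbove D := by
    refine ⟨‖(2:ℝ)⁻¹ • (p₀.1 + (z - p₀.2))‖ + ‖(z - p₀.2) - p₀.1‖/2, ?_⟩
    rintro δ ⟨F, ⟨hFG, hFp₀⟩, rfl⟩
    obtain ⟨u, hu⟩ := mintyCap_nonempty z hG hFG ⟨p₀, hFp₀⟩
    have hub : u ∈ mintyBall z p₀ := mintyCap_subset_ball z hFp₀ hu
    have := mintyBall_bound z p₀ hub
    calc infDist 0 (mintyCap z F) ≤ dist 0 u := infDist_le_dist_of_mem hu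
      _ = ‖u‖ := by rw [dist_zero_left]
      _ ≤ _ := this
  set cs : ℝ := sSup D with hcs
  have hcs_le : ∀ F : Finset (H × H), ↑F ⊆ G → p₀ ∈ F → infDist 0 (mintyCap z F) ≤ cs :=
    fun F h1 h2 => le_csSup hDbdd ⟨F, ⟨h1, h2⟩, rfl⟩
  have hcs0 : 0 ≤ cs := le_trans infDist_nonneg
    (hcs_le {p₀} (by simp [hp₀]) (Finset.mem_singleton_self p₀))
  -- a sequence of finsets approaching the sup
  have hseq : ∀ n : ℕ, ∃ F : Finset (H × H), ↑F ⊆ G ∧ p₀ ∈ F ∧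
      cs - 1/(n+1) < infDist 0 (mintyCap z F) := by
    intro n
    have hlt : cs - 1/(n+1) < cs := by
      have : (0:ℝ) < 1/(n+1) := by positivity
      linarith
    obtain ⟨δ, hδD, hδ⟩ := exists_lt_of_lt_csSup hDne hlt
    obtain ⟨F, ⟨h1, h2⟩, rfl⟩ := hδD
    exact ⟨F, h1, h2, hδ⟩
  choose F₁ hF₁G hF₁p₀ hF₁d using hseq
  set Gn : ℕ → Finset (H × H) := fun n => (Finset.range (n+1)).sup F₁ with hGn
  have hGnG : ∀ n, ↑(Gn n) ⊆ G := by
    intro n p hp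
    rw [Finset.mem_coe, hGn, Finset.mem_sup] at hp
    obtain ⟨i, _, hi⟩ := hp
    exact hF₁G i hi
  have hGnp₀ : ∀ n, p₀ ∈ Gn n := fun n =>
    Finset.mem_sup.2 ⟨0, Finset.mem_range.2 (Nat.succ_pos n), hF₁p₀ 0⟩
  have hGnmono : ∀ m n, m ≤ n → Gn m ⊆ Gn n := fun m n h =>
    Finset.sup_mono (Finset.range_subset_range.2 (by omega))
  have hGnsub : ∀ n, F₁ n ⊆ Gn n := fun n =>
    Finset.le_sup (Finset.mem_range.2 (Nat.lt_succ_self n))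
  have hGnne : ∀ n, (mintyCap z (Gn n)).Nonempty := fun n =>
    mintyCap_nonempty z hG (hGnG n) ⟨p₀, hGnp₀ n⟩
  have hdGn_lb : ∀ n, cs - 1/(n+1) < infDist 0 (mintyCap z (Gn n)) := by
    intro n
    refine lt_of_lt_of_le (hF₁d n) ?_
    exact infDist_le_infDist_of_subset (mintyCap_anti z (hGnsub n)) (hGnne n)
  have hdGn_ub : ∀ n, infDist 0 (mintyCap z (Gn n)) ≤ cs := fun n =>
    hcs_le (Gn n) (hGnG n) (hGnp₀ n)
  -- key parallelogram estimate
  have hest : ∀ (m : ℕ) (a b : H), a ∈ mintyCap z (Gn m) → b ∈ mintyCap z (Gn m) →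
      ‖a‖ ≤ cs → ‖b‖ ≤ cs → ‖a - b‖^2 ≤ 8 * cs * (1/(m+1)) := by
    intro m a b ha hb hna hnb
    have hmid : (2:ℝ)⁻¹ • a + (2:ℝ)⁻¹ • b ∈ mintyCap z (Gn m) :=
      (mintyCap_convex z (Gn m)) ha hb (by norm_num) (by norm_num) (by norm_num)
    have h1 : cs - 1/(m+1) ≤ ‖(2:ℝ)⁻¹ • a + (2:ℝ)⁻¹ • b‖ := by
      refine le_trans (hdGn_lb m).le ?_
      calc infDist 0 (mintyCap z (Gn m)) ≤ dist 0 ((2:ℝ)⁻¹ • a + (2:ℝ)⁻¹ • b) :=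
            infDist_le_dist_of_mem hmid
        _ = _ := by rw [dist_zero_left]
    have hmidn : ‖(2:ℝ)⁻¹ • a + (2:ℝ)⁻¹ • b‖ = ‖a + b‖/2 := by
      rw [show (2:ℝ)⁻¹ • a + (2:ℝ)⁻¹ • b = (2:ℝ)⁻¹ • (a + b) by module,
        norm_smul, Real.norm_eq_abs, abs_of_pos (by norm_num : (0:ℝ) < 2⁻¹)]
      ring
    rw [hmidn] at h1
    have hpar := parallelogram_law_with_norm ℝ a b
    have hε : (0:ℝ) < 1/(m+1) := by positivity
    rcases le_or_gt cs (1/(m+1)) with hcase | hcase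
    · nlinarith [norm_sub_le a b, hna, hnb, hcs0, norm_nonneg (a - b)]
    · have h2 : (cs - 1/(m+1))^2 ≤ (‖a + b‖/2)^2 :=
        pow_le_pow_left₀ (by linarith) h1 2
      have ha2 : ‖a‖^2 ≤ cs^2 := pow_le_pow_left₀ (norm_nonneg a) hna 2
      have hb2 : ‖b‖^2 ≤ cs^2 := pow_le_pow_left₀ (norm_nonneg b) hnb 2
      nlinarith [hpar, h2, ha2, hb2, hε, hcs0]
  -- projections onto the decreasing caps
  have hprojGn : ∀ n, ∃ v, v ∈ mintyCap z (Gn n) ∧ ‖v‖ = infDist 0 (mintyCap z (Gn n)) :=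
    fun n => minty_proj (hGnne n) (mintyCap_closed z (Gn n)) (mintyCap_convex z (Gn n))
  choose un hun hund using hprojGn
  have hun_cs : ∀ n, ‖un n‖ ≤ cs := fun n => (hund n).symm ▸ hdGn_ub n
  set bnd : ℕ → ℝ := fun N => Real.sqrt (8 * cs * (1/(N+1))) with hbnd
  have hcau_est : ∀ n m N : ℕ, N ≤ n → N ≤ m → dist (un n) (un m) ≤ bnd N := by
    intro n m N hn hm
    have han : un n ∈ mintyCap z (Gn N) := mintyCap_anti z (hGnmono N n hn) (hun n)
    have ham : un m ∈ mintyCap z (Gn N) := mintyCap_anti z (hGnmono N m hm) (hun m)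
    have := hest N (un n) (un m) han ham (hun_cs n) (hun_cs m)
    rw [dist_eq_norm]
    rw [hbnd]
    exact (Real.le_sqrt (norm_nonneg _) (by positivity)).2 this
  have hbnd0 : Filter.Tendsto bnd Filter.atTop (nhds 0) := by
    have h1 : Filter.Tendsto (fun N : ℕ => 8 * cs * (1/((N:ℝ)+1))) Filter.atTop (nhds 0) := by
      have h2 := (tendsto_const_div_atTop_nhds_zero_nat (8*cs)).comp
        (Filter.tendsto_add_atTop_nat 1)
      have he : (fun N : ℕ => 8 * cs * (1/((N:ℝ)+1)))
          = (fun n : ℕ => (8*cs) / (n:ℝ)) ∘ (fun a => a + 1) := by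
        funext N
        simp only [Function.comp_apply]
        push_cast
        ring
      rw [he]
      exact h2
    have h3 := (Real.continuous_sqrt.tendsto 0).comp h1
    rwa [Real.sqrt_zero] at h3
  have hcauchy : CauchySeq un := cauchySeq_of_le_tendsto_0 bnd hcau_est hbnd0
  obtain ⟨wl, hwl⟩ := cauchySeq_tendsto_of_complete hcauchy
  refine ⟨wl, fun p hp => ?_⟩
  have hins : ∀ m : ℕ, ↑(insert p (Gn m)) ⊆ G := by
    intro m
    rw [Finset.coe_insert]
    exact Set.insert_subset_iff.2 ⟨hp, hGnG m⟩
  have hprojv : ∀ m : ℕ, ∃ v, v ∈ mintyCap z (insert p (Gn m)) ∧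
      ‖v‖ = infDist 0 (mintyCap z (insert p (Gn m))) := fun m =>
    minty_proj (mintyCap_nonempty z hG (hins m) ⟨p, Finset.mem_insert_self _ _⟩)
      (mintyCap_closed _ _) (mintyCap_convex _ _)
  choose vm hvm hvmd using hprojv
  have hvmcs : ∀ m, ‖vm m‖ ≤ cs := fun m => (hvmd m).symm ▸
    hcs_le _ (hins m) (Finset.mem_insert_of_mem (hGnp₀ m))
  have hvmB : ∀ m, vm m ∈ mintyBall z p := fun m =>
    mintyCap_subset_ball z (Finset.mem_insert_self p _) (hvm m)
  have hvmGn : ∀ m, vm m ∈ mintyCap z (Gn m) := fun m =>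
    mintyCap_anti z (Finset.subset_insert _ _) (hvm m)
  have hdist : ∀ m, dist (vm m) (un m) ≤ bnd m := by
    intro m
    have := hest m (vm m) (un m) (hvmGn m) (hun m) (hvmcs m) (hun_cs m)
    rw [dist_eq_norm, hbnd]
    exact (Real.le_sqrt (norm_nonneg _) (by positivity)).2 this
  have hun_wl : Filter.Tendsto (fun m => dist (un m) wl) Filter.atTop (nhds 0) :=
    tendsto_iff_dist_tendsto_zero.1 hwl
  have htend : Filter.Tendsto vm Filter.atTop (nhds wl) := by
    rw [tendsto_iff_dist_tendsto_zero]
    refine squeeze_zero (g := fun m => bnd m + dist (un m) wl) (fun m => dist_nonneg) (fun m => ?_) ?_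
    · exact (dist_triangle (vm m) (un m) wl).trans
        (add_le_add_left (hdist m) _)
    · simpa using hbnd0.add hun_wl
  exact (mintyBall_closed z p).mem_of_tendsto htend (Filter.Eventually.of_forall hvmB)


/-- Minty's theorem: a monotone operator `A` (with graph `G`) on a real Hilbert space
is maximally monotone iff the range of `Id + A` is all of `H`. -/
theorem minty [CompleteSpace H] (G : Set (H × H)) (hG : IsMonotoneSet G) :
    IsMaxMonotoneSet G ↔ ∀ z : H, ∃ p ∈ G, p.1 + p.2 = z := by
  constructor
  · intro hmax z
    have hGne : G.Nonempty := by
      by_contra h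
      rw [Set.not_nonempty_iff_eq_empty] at h
      have hmono0 : IsMonotoneSet ({((0:H), (0:H))} : Set (H × H)) := by
        intro p hp q hq
        rw [Set.mem_singleton_iff] at hp hq
        subst hp; subst hq; simp
      have h1 := hmax.2 _ hmono0 (by rw [h]; exact Set.empty_subset _)
      rw [h] at h1
      exact absurd h1 (Set.singleton_ne_empty _)
    obtain ⟨w, hw⟩ := minty_inter hG hGne z
    have hmono' : IsMonotoneSet (insert (w, z - w) G) := by
      rintro p hp q hq
      rcases Set.mem_insert_iff.1 hp with rfl | hp' <;>
        rcases Set.mem_insert_iff.1 hq with rfl | hq'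
      · simp
      · exact hw q hq'
      · show (0:ℝ) ≤ inner ℝ (p.2 - (z - w)) (p.1 - w)
        have h2 := hw p hp'
        have e : (⟪p.2 - (z - w), p.1 - w⟫ : ℝ) = ⟪z - w - p.2, w - p.1⟫ := by
          rw [show p.2 - (z - w) = -(z - w - p.2) by abel,
            show p.1 - w = -(w - p.1) by abel, inner_neg_neg]
        rw [e]; exact h2
      · exact hG p hp' q hq'
    have hGeq := hmax.2 _ hmono' (Set.subset_insert _ _)
    have hmem : (w, z - w) ∈ G := hGeq ▸ Set.mem_insert _ _
    exact ⟨(w, z - w), hmem, by simp⟩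
  · intro hsurj
    refine ⟨hG, fun G' hG' hsub => ?_⟩
    refine Set.Subset.antisymm (fun x hx => ?_) hsub
    obtain ⟨pr, hpr, hprz⟩ := hsurj (x.1 + x.2)
    have h1 := hG' x hx pr (hsub hpr)
    have e0 : x.1 - pr.1 + (x.2 - pr.2) = (x.1 + x.2) - (pr.1 + pr.2) := by abel
    rw [hprz, sub_self] at e0
    have e : x.1 - pr.1 = -(x.2 - pr.2) := eq_neg_of_add_eq_zero_left e0
    have h2 : x.2 - pr.2 = 0 := by
      rw [e, inner_neg_right] at h1
      have h3 : (⟪x.2 - pr.2, x.2 - pr.2⟫ : ℝ) ≤ 0 := by linarith [h1]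
      exact real_inner_self_nonpos.1 h3
    have h3 : x.1 - pr.1 = 0 := by rw [e, h2, neg_zero]
    have hx_eq : x = pr := Prod.ext (by rwa [sub_eq_zero] at h3) (by rwa [sub_eq_zero] at h2)
    rw [hx_eq]; exact hpr
end

section
/- Let A : H ⇉ H be a monotone set-valued operator on a real Hilbert space H whose resolvent (Id + A)^{-1} is single-valued and defined on all of H (i.e., for every y ∈ H there is exactly one x with y - x ∈ A(x)). Then A is maximally monotone. -/
variable {H : Type*} [NormedAddCommGroup H] [InnerProductSpace ℝ H]

/-- A monotone operator whose resolvent is single-valued and everywhere defined is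
maximally monotone. -/
theorem monotone_with_full_single_valued_resolvent_is_maximal
    (G : Set (H × H)) (hG : IsMonotoneSet G)
    (hres : ∀ y : H, ∃! x : H, (x, y - x) ∈ G) :
    IsMaxMonotoneSet G := by
  refine ⟨hG, fun G' hG' hsub => ?_⟩
  apply Set.Subset.antisymm _ hsub
  rintro ⟨x, u⟩ hxu
  obtain ⟨z, hz, -⟩ := hres (x + u)
  have hz' : (z, x + u - z) ∈ G' := hsub hz
  have hmono := hG' (x, u) hxu (z, x + u - z) hz'
  simp only at hmono
  have key : (inner ℝ (u - (x + u - z)) (x - z) : ℝ) = -‖x - z‖ ^ 2 := by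
    have : u - (x + u - z) = -(x - z) := by abel
    rw [this, inner_neg_left, real_inner_self_eq_norm_sq]
  rw [key] at hmono
  have hxz : x = z := by
    have : ‖x - z‖ ^ 2 ≤ 0 := by linarith
    have := sq_nonneg ‖x - z‖
    have hnorm : ‖x - z‖ ^ 2 = 0 := le_antisymm ‹‖x - z‖ ^ 2 ≤ 0› this
    have := pow_eq_zero_iff (n := 2) (by norm_num) |>.mp hnorm
    rwa [norm_eq_zero, sub_eq_zero] at this
  subst hxz
  have : x + u - x = u := by abel
  rwa [this] at hz
end

section
/- Let B : H ⇉ H be maximally monotone, y ∈ H, x := J_B(y). Suppose B is proto-differentiable at x relative to y - x ∈ B(x) with maximally monotone proto-derivative D := D_pB(x|y-x). Then J_B is directionally differentiable at y and J_B'(y; h) = (Id + D)^{-1}(h) for all h ∈ H. -/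
variable {H : Type*} [NormedAddCommGroup H] [InnerProductSpace ℝ H]

open Filter

/-- Graphical (Kuratowski) convergence of a `τ`-indexed family of graphs
`Δ τ ⊆ H × H` to a set `D` as `τ ↘ 0`. -/
def GraphConvTo {H : Type*} [NormedAddCommGroup H]
    (Δ : ℝ → Set (H × H)) (D : Set (H × H)) : Prop :=
  -- inner limit: every point of D is attained along every sequence τₖ ↘ 0
  (∀ p ∈ D, ∀ τk : ℕ → ℝ, (∀ k, 0 < τk k) → Tendsto τk atTop (nhds 0) →
    ∃ pk : ℕ → H × H, (∀ k, pk k ∈ Δ (τk k)) ∧ Tendsto pk atTop (nhds p)) ∧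
  -- outer limit: every graphical limit point lies in D
  (∀ (τk : ℕ → ℝ), (∀ k, 0 < τk k) → Tendsto τk atTop (nhds 0) →
    ∀ pk : ℕ → H × H, (∀ k, pk k ∈ Δ (τk k)) →
    ∀ p : H × H, Tendsto pk atTop (nhds p) → p ∈ D)

/-- The difference-quotient graphs of `B` (with graph `G`) at `x` relative to `v`:
`(h, w) ∈ Δ τ` iff `(x + τ h, v + τ w) ∈ G`. -/
def protoQuot {H : Type*} [NormedAddCommGroup H] [Module ℝ H]
    (G : Set (H × H)) (x v : H) (τ : ℝ) : Set (H × H) :=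
  {p : H × H | (x + τ • p.1, v + τ • p.2) ∈ G}

/- ## Auxiliary identities -/

theorem combo_id (q u v : H) (t : ℝ) :
    ‖q - (u + t•(v-u))‖^2 = (1-t)*‖q-u‖^2 + t*‖q-v‖^2 - t*(1-t)*‖u-v‖^2 := by
  simp only [← real_inner_self_eq_norm_sq, inner_sub_left, inner_sub_right,
    inner_add_left, inner_add_right, real_inner_smul_left, real_inner_smul_right]
  ring_nf

theorem ball_id (u a e : H) :
    ‖e-a‖^2/4 - ‖u - (2:ℝ)⁻¹•(a+e)‖^2 = (inner ℝ (e - u) (u - a) : ℝ) := by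
  simp only [← real_inner_self_eq_norm_sq, inner_sub_left, inner_sub_right,
    inner_add_left, inner_add_right, real_inner_smul_left, real_inner_smul_right]
  linear_combination -(real_inner_comm e a)/2 + (real_inner_comm u a)/2 - (real_inner_comm u e)/2

set_option maxHeartbeats 1000000

/-- If `B` is proto-differentiable at `x = J_B(y)` relative to `y - x ∈ B(x)` with
maximally monotone proto-derivative `D`, then `J_B` is directionally differentiable
at `y` with `J_B'(y; h) = (Id + D)⁻¹ h`. -/
theorem proto_diff_implies_directional_diff
    [CompleteSpace H] (G : Set (H × H)) (hG : IsMaxMonotoneSet G)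
    (J : H → H) (hJ : ∀ z : H, (J z, z - J z) ∈ G)
    (y : H) (x : H) (hx : x = J y)
    (D : Set (H × H))
    (hproto : GraphConvTo (protoQuot G x (y - x)) D)
    (hDmax : IsMaxMonotoneSet D) :
    ∀ h : H, ∃ d : H, (d, h - d) ∈ D ∧
      Tendsto (fun τ : ℝ => τ⁻¹ • (J (y + τ • h) - J y))
        (nhdsWithin 0 (Set.Ioi 0)) (nhds d) := by
  classical
  intro h
  simp only [← hx]
  -- the difference quotient of the resolvent
  set q : ℝ → H := fun τ => τ⁻¹ • (J (y + τ • h) - x) with hqdef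
  -- J is 1-Lipschitz
  have lip : ∀ z w : H, ‖J z - J w‖ ≤ ‖z - w‖ := by
    intro z w
    have hmono := hG.1 (J z, z - J z) (hJ z) (J w, w - J w) (hJ w)
    simp only at hmono
    have h1 : (z - J z) - (w - J w) = (z - w) - (J z - J w) := by abel
    rw [h1, inner_sub_left] at hmono
    have h2 : (inner ℝ (J z - J w) (J z - J w) : ℝ) = ‖J z - J w‖^2 :=
      real_inner_self_eq_norm_sq _
    have h3 := real_inner_le_norm (z - w) (J z - J w)
    nlinarith [norm_nonneg (J z - J w), norm_nonneg (z - w)]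
  -- the quotient pair belongs to the quotient graph
  have hqmem : ∀ τ : ℝ, 0 < τ → (q τ, h - q τ) ∈ protoQuot G x (y - x) τ := by
    intro τ hτ
    have h1 : x + τ • q τ = J (y + τ • h) := by
      rw [hqdef]; simp only
      rw [smul_inv_smul₀ hτ.ne']; abel
    have h2 : (y - x) + τ • (h - q τ) = (y + τ • h) - J (y + τ • h) := by
      rw [hqdef]; simp only
      rw [smul_sub, smul_inv_smul₀ hτ.ne']; abel
    show (x + τ • q τ, (y - x) + τ • (h - q τ)) ∈ G
    rw [h1, h2]; exact hJ _
  -- bound on the quotient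
  have hqbound : ∀ τ : ℝ, 0 < τ → ‖q τ‖ ≤ ‖h‖ := by
    intro τ hτ
    have h1 : ‖J (y + τ • h) - J y‖ ≤ τ * ‖h‖ := by
      have := lip (y + τ • h) y
      simpa [norm_smul, abs_of_pos hτ] using this
    show ‖τ⁻¹ • (J (y + τ • h) - x)‖ ≤ ‖h‖
    rw [hx, norm_smul, Real.norm_eq_abs, abs_of_pos (inv_pos.mpr hτ)]
    calc τ⁻¹ * ‖J (y + τ • h) - J y‖ ≤ τ⁻¹ * (τ * ‖h‖) := by
          exact mul_le_mul_of_nonneg_left h1 (inv_pos.mpr hτ).le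
      _ = ‖h‖ := by field_simp
  -- the quotient graphs are monotone
  have hmonoΔ : ∀ τ : ℝ, 0 < τ → IsMonotoneSet (protoQuot G x (y - x) τ) := by
    intro τ hτ p hp p' hp'
    have hm := hG.1 _ hp _ hp'
    simp only at hm
    have h1 : ((y - x) + τ • p.2) - ((y - x) + τ • p'.2) = τ • (p.2 - p'.2) := by
      rw [smul_sub]; abel
    have h2 : (x + τ • p.1) - (x + τ • p'.1) = τ • (p.1 - p'.1) := by
      rw [smul_sub]; abel
    rw [h1, h2, real_inner_smul_left, real_inner_smul_right] at hm
    nlinarith [mul_pos hτ hτ]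
  -- the key resolvent estimate within each quotient graph
  have key : ∀ τ : ℝ, 0 < τ → ∀ p ∈ protoQuot G x (y - x) τ,
      ‖q τ - p.1‖ ≤ ‖h - p.1 - p.2‖ := by
    intro τ hτ p hp
    have hm := hmonoΔ τ hτ (q τ, h - q τ) (hqmem τ hτ) p hp
    simp only at hm
    have h1 : (h - q τ) - p.2 = (h - p.1 - p.2) - (q τ - p.1) := by abel
    rw [h1, inner_sub_left] at hm
    have h2 : (inner ℝ (q τ - p.1) (q τ - p.1) : ℝ) = ‖q τ - p.1‖^2 :=
      real_inner_self_eq_norm_sq _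
    have h3 := real_inner_le_norm (h - p.1 - p.2) (q τ - p.1)
    nlinarith [norm_nonneg (q τ - p.1), norm_nonneg (h - p.1 - p.2)]
  -- the canonical vanishing sequence
  set τ0 : ℕ → ℝ := fun k => ((k:ℝ) + 1)⁻¹ with hτ0def
  have hτ0pos : ∀ k, 0 < τ0 k := by intro k; positivity
  have hτ0lim : Tendsto τ0 atTop (nhds 0) := by
    have h1 : Tendsto (fun k : ℕ => ((k:ℝ) + 1)) atTop atTop :=
      tendsto_atTop_add_const_right _ 1 tendsto_natCast_atTop_atTop
    exact tendsto_inv_atTop_zero.comp h1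
  -- existence of d with (d, h - d) ∈ D
  obtain ⟨d, hd⟩ : ∃ d : H, (d, h - d) ∈ D := by
    set Q : ℕ → H := fun k => q (τ0 k) with hQdef
    have hQb : ∀ k, ‖Q k‖ ≤ ‖h‖ := fun k => hqbound _ (hτ0pos k)
    -- an ultrafilter extending atTop, and the corresponding limit functional
    set U : Ultrafilter ℕ := Ultrafilter.of atTop with hUdef
    have hUle : (U : Filter ℕ) ≤ atTop := Ultrafilter.of_le _
    have hlim : ∀ u : H, ∃ L : ℝ,
        Tendsto (fun k => ‖Q k - u‖^2) (U : Filter ℕ) (nhds L) := by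
      intro u
      have hmem : ∀ k, ‖Q k - u‖^2 ∈ Set.Icc (0:ℝ) ((‖h‖ + ‖u‖)^2) := by
        intro k
        constructor
        · positivity
        · have h1 : ‖Q k - u‖ ≤ ‖h‖ + ‖u‖ :=
            le_trans (norm_sub_le _ _) (add_le_add (hQb k) le_rfl)
          exact pow_le_pow_left₀ (norm_nonneg _) h1 2
      have hle : (Ultrafilter.map (fun k => ‖Q k - u‖^2) U : Filter ℝ) ≤
          Filter.principal (Set.Icc (0:ℝ) ((‖h‖ + ‖u‖)^2)) := by
        rw [le_principal_iff]
        exact Filter.mem_map.mpr (Filter.univ_mem' fun k => hmem k)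
      obtain ⟨L, -, hL⟩ := isCompact_Icc.ultrafilter_le_nhds _ hle
      exact ⟨L, hL⟩
    choose φ hφ using hlim
    have φnonneg : ∀ u : H, 0 ≤ φ u := fun u =>
      ge_of_tendsto' (hφ u) (fun k => sq_nonneg _)
    -- the exact convexity identity for φ
    have hcombo : ∀ (u v : H) (t : ℝ),
        φ (u + t • (v - u)) = (1-t)*φ u + t*φ v - t*(1-t)*‖u-v‖^2 := by
      intro u v t
      refine tendsto_nhds_unique (hφ _) ?_
      have heq : (fun k => ‖Q k - (u + t • (v - u))‖^2) =
          fun k => (1-t)*‖Q k - u‖^2 + t*‖Q k - v‖^2 - t*(1-t)*‖u-v‖^2 := by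
        funext k; exact combo_id (Q k) u v t
      rw [heq]
      exact (((hφ u).const_mul _).add ((hφ v).const_mul _)).sub tendsto_const_nhds
    -- minimize φ
    have : Nonempty H := ⟨0⟩
    set m : ℝ := ⨅ u : H, φ u with hmdef
    have hbdd : BddBelow (Set.range φ) := ⟨0, by rintro r ⟨u, rfl⟩; exact φnonneg u⟩
    have hmle : ∀ u : H, m ≤ φ u := fun u => ciInf_le hbdd u
    have hm0 : 0 ≤ m := le_ciInf φnonneg
    have hseq : ∀ n : ℕ, ∃ u : H, φ u < m + τ0 n := by
      intro n
      exact exists_lt_of_ciInf_lt (by linarith [hτ0pos n])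
    choose w hw using hseq
    -- strong-convexity estimate for pairs of near minimizers
    have hpair : ∀ n n' : ℕ, ‖w n - w n'‖^2 ≤ 2*(τ0 n) + 2*(τ0 n') := by
      intro n n'
      have h1 := hcombo (w n) (w n') (2⁻¹)
      have h2 := hmle (w n + (2:ℝ)⁻¹ • (w n' - w n))
      have h3 := hw n
      have h4 := hw n'
      nlinarith
    -- the minimizing sequence is Cauchy
    have hCauchy : CauchySeq w := by
      refine cauchySeq_of_le_tendsto_0 (fun N => Real.sqrt (4 * τ0 N)) ?_ ?_
      · intro n n' N hn hn'
        have hττ1 : τ0 n ≤ τ0 N := by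
          apply inv_anti₀ (by positivity)
          have : (N:ℝ) ≤ (n:ℝ) := Nat.cast_le.mpr hn
          linarith
        have hττ2 : τ0 n' ≤ τ0 N := by
          apply inv_anti₀ (by positivity)
          have : (N:ℝ) ≤ (n':ℝ) := Nat.cast_le.mpr hn'
          linarith
        rw [dist_eq_norm]
        apply Real.le_sqrt_of_sq_le
        have := hpair n n'
        linarith
      · have h1 : Tendsto (fun N => 4 * τ0 N) atTop (nhds 0) := by
          simpa using hτ0lim.const_mul (4:ℝ)
        have h2 := (Real.continuous_sqrt.tendsto 0).comp h1
        rw [Real.sqrt_zero] at h2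
        exact h2
    obtain ⟨d, hdlim⟩ := cauchySeq_tendsto_of_complete hCauchy
    -- φ attains its minimum at d
    have hφdm : φ d ≤ m := by
      have step : ∀ n, φ d ≤ φ (w n) + ‖d - w n‖ * (2*‖h‖ + ‖d‖ + ‖w n‖) := by
        intro n
        refine le_of_tendsto_of_tendsto' (hφ d) ((hφ (w n)).add tendsto_const_nhds) ?_
        intro k
        have t1 : ‖Q k - d‖ - ‖Q k - w n‖ ≤ ‖d - w n‖ := by
          have t0 := norm_sub_norm_le (Q k - d) (Q k - w n)
          have h2 : (Q k - d) - (Q k - w n) = -(d - w n) := by abel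
          rw [h2, norm_neg] at t0
          exact t0
        have t2 : ‖Q k - d‖ ≤ ‖h‖ + ‖d‖ :=
          le_trans (norm_sub_le _ _) (add_le_add (hQb k) le_rfl)
        have t3 : ‖Q k - w n‖ ≤ ‖h‖ + ‖w n‖ :=
          le_trans (norm_sub_le _ _) (add_le_add (hQb k) le_rfl)
        nlinarith [norm_nonneg (Q k - d), norm_nonneg (Q k - w n),
          norm_nonneg (d - w n),
          mul_le_mul_of_nonneg_right t1
            (show (0:ℝ) ≤ ‖Q k - d‖ + ‖Q k - w n‖ by positivity),
          mul_le_mul_of_nonneg_left (add_le_add t2 t3) (norm_nonneg (d - w n))]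
      have hφw : Tendsto (fun n => φ (w n)) atTop (nhds m) := by
        refine tendsto_of_tendsto_of_tendsto_of_le_of_le tendsto_const_nhds
          (by simpa using tendsto_const_nhds.add hτ0lim) (fun n => hmle (w n))
          (fun n => (hw n).le)
      have hwd0 : Tendsto (fun n => ‖d - w n‖) atTop (nhds 0) := by
        have : Tendsto (fun n => d - w n) atTop (nhds (d - d)) :=
          tendsto_const_nhds.sub hdlim
        simpa using this.norm
      have hC : Tendsto (fun n => 2*‖h‖ + ‖d‖ + ‖w n‖) atTop
          (nhds (2*‖h‖ + ‖d‖ + ‖d‖)) :=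
        tendsto_const_nhds.add hdlim.norm
      have hR : Tendsto (fun n => φ (w n) + ‖d - w n‖ * (2*‖h‖ + ‖d‖ + ‖w n‖))
          atTop (nhds m) := by
        have := hφw.add (hwd0.mul hC)
        simpa using this
      exact ge_of_tendsto' hR step
    -- d satisfies the variational inequality with respect to D
    have hrel : ∀ p ∈ D, (inner ℝ ((h - d) - p.2) (d - p.1) : ℝ) ≥ 0 := by
      intro p hp
      obtain ⟨pk, hpkmem, hpklim⟩ := hproto.1 p hp τ0 hτ0pos hτ0lim
      obtain ⟨a, b⟩ := p
      have hak : Tendsto (fun k => (pk k).1) atTop (nhds a) :=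
        (continuous_fst.tendsto _).comp hpklim
      have hbk : Tendsto (fun k => (pk k).2) atTop (nhds b) :=
        (continuous_snd.tendsto _).comp hpklim
      set c : H := (2:ℝ)⁻¹ • (a + (h - b)) with hcdef
      have hball : ∀ k, ‖Q k - c‖^2 ≤
          (‖(h - (pk k).2) - (pk k).1‖/2 +
            ‖(2:ℝ)⁻¹ • ((pk k).1 + (h - (pk k).2)) - c‖)^2 := by
        intro k
        have hm := hmonoΔ (τ0 k) (hτ0pos k) (Q k, h - Q k)
          (hqmem (τ0 k) (hτ0pos k)) (pk k) (hpkmem k)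
        simp only at hm
        have hid := ball_id (Q k) (pk k).1 (h - (pk k).2)
        have he : (h - (pk k).2) - Q k = (h - Q k) - (pk k).2 := by abel
        rw [he] at hid
        have h1 : ‖Q k - (2:ℝ)⁻¹ • ((pk k).1 + (h - (pk k).2))‖^2 ≤
            ‖(h - (pk k).2) - (pk k).1‖^2/4 := by linarith
        have h2 : ‖Q k - (2:ℝ)⁻¹ • ((pk k).1 + (h - (pk k).2))‖ ≤
            ‖(h - (pk k).2) - (pk k).1‖/2 := by
          apply le_of_pow_le_pow_left₀ (n := 2) (by norm_num) (by positivity)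
          calc ‖Q k - (2:ℝ)⁻¹ • ((pk k).1 + (h - (pk k).2))‖^2
              ≤ ‖(h - (pk k).2) - (pk k).1‖^2/4 := h1
            _ = (‖(h - (pk k).2) - (pk k).1‖/2)^2 := by ring
        have h3 : ‖Q k - c‖ ≤ ‖(h - (pk k).2) - (pk k).1‖/2 +
            ‖(2:ℝ)⁻¹ • ((pk k).1 + (h - (pk k).2)) - c‖ := by
          calc ‖Q k - c‖ ≤ ‖Q k - (2:ℝ)⁻¹ • ((pk k).1 + (h - (pk k).2))‖ +
              ‖(2:ℝ)⁻¹ • ((pk k).1 + (h - (pk k).2)) - c‖ :=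
                norm_sub_le_norm_sub_add_norm_sub _ _ _
            _ ≤ _ := by linarith
        exact pow_le_pow_left₀ (norm_nonneg _) h3 2
      have hφc : φ c ≤ (‖(h - b) - a‖/2)^2 := by
        have l1 : Tendsto (fun k => (h - (pk k).2) - (pk k).1) atTop
            (nhds ((h - b) - a)) := (tendsto_const_nhds.sub hbk).sub hak
        have l2 : Tendsto (fun k => (2:ℝ)⁻¹ • ((pk k).1 + (h - (pk k).2)) - c)
            atTop (nhds ((2:ℝ)⁻¹ • (a + (h - b)) - c)) :=
          ((hak.add (tendsto_const_nhds.sub hbk)).const_smul _).sub tendsto_const_nhds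
        have l3 : Tendsto (fun k => (‖(h - (pk k).2) - (pk k).1‖/2 +
            ‖(2:ℝ)⁻¹ • ((pk k).1 + (h - (pk k).2)) - c‖)^2) atTop
            (nhds ((‖(h - b) - a‖/2)^2)) := by
          have := ((l1.norm.div_const 2).add l2.norm).pow 2
          simpa [hcdef, sub_self] using this
        exact le_of_tendsto_of_tendsto' (hφ c) (l3.mono_left hUle) hball
      -- contradiction argument
      by_contra hneg
      push_neg at hneg
      have hid2 := ball_id d a (h - b)
      have he2 : (h - b) - d = (h - d) - b := by abel
      rw [he2, ← hcdef] at hid2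
      have hRρ : ‖(h - b) - a‖^2/4 < ‖d - c‖^2 := by
        linarith
      set ρ2 : ℝ := ‖(h - b) - a‖^2/4 with hρdef
      set R : ℝ := ‖d - c‖^2 with hRdef
      have hρ0 : 0 ≤ ρ2 := by positivity
      have hR0 : 0 < R := lt_of_le_of_lt hρ0 hRρ
      set t : ℝ := (R - ρ2)/(2*R) with htdef
      have ht0 : 0 < t := by
        apply div_pos (by linarith) (by linarith)
      have ht1 : t < 1 := by
        rw [htdef, div_lt_one (by linarith)]
        linarith
      have hcomb := hcombo d c t
      have hmle' := hmle (d + t • (c - d))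
      have hφc' : φ c ≤ ρ2 := by
        rw [hρdef]
        calc φ c ≤ (‖(h - b) - a‖/2)^2 := hφc
          _ = ‖(h - b) - a‖^2/4 := by ring
      have hfin : m ≤ (1-t)*m + t*ρ2 - t*(1-t)*R := by
        calc m ≤ φ (d + t • (c - d)) := hmle'
          _ = (1-t)*φ d + t*φ c - t*(1-t)*‖d - c‖^2 := hcomb
          _ ≤ (1-t)*m + t*ρ2 - t*(1-t)*R := by
              rw [← hRdef]
              nlinarith [mul_le_mul_of_nonneg_left hφdm (by linarith : (0:ℝ) ≤ 1-t),
                mul_le_mul_of_nonneg_left hφc' ht0.le]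
      have h1tR : (1-t)*R = (R + ρ2)/2 := by
        rw [htdef]; field_simp; ring
      have hu : ρ2 - m - (1-t)*R < 0 := by rw [h1tR]; linarith
      have hcontra : t*(ρ2 - m - (1-t)*R) < 0 := mul_neg_of_pos_of_neg ht0 hu
      nlinarith [hfin, hcontra]
    -- maximality of D yields membership
    refine ⟨d, ?_⟩
    have hmono' : IsMonotoneSet (insert (d, h - d) D) := by
      rintro p hp p' hp'
      rcases hp with rfl | hp <;> rcases hp' with rfl | hp'
      · simp
      · exact hrel p' hp'
      · have hthis := hrel p hp
        show (inner ℝ (p.2 - (h - d)) (p.1 - d) : ℝ) ≥ 0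
        rw [show p.2 - (h - d) = -((h - d) - p.2) from by abel,
          show p.1 - d = -(d - p.1) from by abel, inner_neg_neg]
        exact hthis
      · exact hDmax.1 p hp p' hp'
    have heq := hDmax.2 _ hmono' (Set.subset_insert _ _)
    exact heq ▸ Set.mem_insert _ _
  -- convergence of the quotients along any positive vanishing sequence
  have conv : ∀ σ : ℕ → ℝ, (∀ k, 0 < σ k) → Tendsto σ atTop (nhds 0) →
      Tendsto (fun k => q (σ k)) atTop (nhds d) := by
    intro σ hσpos hσ0
    obtain ⟨pk, hpkmem, hpklim⟩ := hproto.1 (d, h - d) hd σ hσpos hσ0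
    have hak : Tendsto (fun k => (pk k).1) atTop (nhds d) :=
      (continuous_fst.tendsto _).comp hpklim
    have hbk : Tendsto (fun k => (pk k).2) atTop (nhds (h - d)) :=
      (continuous_snd.tendsto _).comp hpklim
    have hbound : ∀ k, ‖q (σ k) - d‖ ≤
        ‖h - (pk k).1 - (pk k).2‖ + ‖(pk k).1 - d‖ := by
      intro k
      calc ‖q (σ k) - d‖ ≤ ‖q (σ k) - (pk k).1‖ + ‖(pk k).1 - d‖ :=
            norm_sub_le_norm_sub_add_norm_sub _ _ _
        _ ≤ _ := add_le_add (key (σ k) (hσpos k) (pk k) (hpkmem k)) le_rfl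
    have hg : Tendsto (fun k => ‖h - (pk k).1 - (pk k).2‖ + ‖(pk k).1 - d‖)
        atTop (nhds 0) := by
      have l1 : Tendsto (fun k => h - (pk k).1 - (pk k).2) atTop
          (nhds (h - d - (h - d))) := (tendsto_const_nhds.sub hak).sub hbk
      have l2 : Tendsto (fun k => (pk k).1 - d) atTop (nhds (d - d)) :=
        hak.sub tendsto_const_nhds
      have := l1.norm.add l2.norm
      simpa using this
    have hn0 : Tendsto (fun k => ‖q (σ k) - d‖) atTop (nhds 0) :=
      squeeze_zero (fun k => norm_nonneg _) hbound hg
    rw [tendsto_iff_norm_sub_tendsto_zero]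
    exact hn0
  -- conclude via the sequential characterization
  refine ⟨d, hd, ?_⟩
  rw [tendsto_iff_seq_tendsto]
  intro s hs
  obtain ⟨hs0, hsmem⟩ := tendsto_nhdsWithin_iff.mp hs
  set σ : ℕ → ℝ := fun n => if 0 < s n then s n else ((n:ℝ) + 1)⁻¹ with hσdef
  have hσpos : ∀ n, 0 < σ n := by
    intro n
    by_cases hc : 0 < s n
    · simpa [hσdef, hc] using hc
    · simp only [hσdef, hc, if_false]
      positivity
  have hσeq : σ =ᶠ[atTop] s := by
    filter_upwards [hsmem] with n hn
    simp [hσdef, Set.mem_Ioi.mp hn]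
  have hσ0 : Tendsto σ atTop (nhds 0) := hs0.congr' hσeq.symm
  have hconv := conv σ hσpos hσ0
  refine hconv.congr' ?_
  filter_upwards [hσeq] with n hn
  simp only [Function.comp, hqdef, hn]
end

section
/- Let B : H ⇉ H be maximally monotone, y ∈ H, x := J_B(y). If J_B is directionally differentiable at y, then B is proto-differentiable at x relative to y - x, the resolvent of the proto-derivative D_pB(x|y-x) equals the single-valued map h ↦ J_B'(y; h) defined on all of H, and hence D_pB(x|y-x) is maximally monotone. -/
variable {H : Type*} [NormedAddCommGroup H] [InnerProductSpace ℝ H]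

open Filter

/-- Resolvent characterization of membership in a monotone graph. -/
lemma aux_res_char (G : Set (H × H)) (hGm : IsMonotoneSet G)
    (J : H → H) (hJ : ∀ z : H, (J z, z - J z) ∈ G) (a b : H) :
    (a, b) ∈ G ↔ J (a + b) = a := by
  constructor
  · intro hab
    have h2 := hJ (a + b)
    have := hGm (a, b) hab (J (a+b), (a+b) - J (a+b)) h2
    simp only at this
    have heq : b - (a + b - J (a+b)) = J (a+b) - a := by abel
    rw [heq] at this
    have : (inner ℝ (J (a+b) - a) (a - J (a+b)) : ℝ) ≥ 0 := this
    rw [show a - J (a+b) = -(J (a+b) - a) by abel, inner_neg_right] at this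
    have hn : (inner ℝ (J (a+b) - a) (J (a+b) - a) : ℝ) ≤ 0 := by linarith
    have h0 := real_inner_self_nonneg (x := J (a+b) - a)
    have hz : (inner ℝ (J (a+b) - a) (J (a+b) - a) : ℝ) = 0 := le_antisymm hn h0
    have := inner_self_eq_zero.mp hz
    rwa [sub_eq_zero] at this
  · intro h
    have := hJ (a + b)
    rw [h] at this
    simpa using this

/-- Firm nonexpansiveness of the resolvent. -/
lemma aux_firm (G : Set (H × H)) (hGm : IsMonotoneSet G)
    (J : H → H) (hJ : ∀ z : H, (J z, z - J z) ∈ G) (z z' : H) :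
    ‖J z - J z'‖^2 ≤ (inner ℝ (z - z') (J z - J z') : ℝ) := by
  have := hGm (J z, z - J z) (hJ z) (J z', z' - J z') (hJ z')
  simp only at this
  have heq : z - J z - (z' - J z') = (z - z') - (J z - J z') := by abel
  rw [heq, inner_sub_left, real_inner_self_eq_norm_sq] at this
  linarith [real_inner_comm (z - z') (J z - J z')]

/-- Nonexpansiveness of the resolvent. -/
lemma aux_nonexp (G : Set (H × H)) (hGm : IsMonotoneSet G)
    (J : H → H) (hJ : ∀ z : H, (J z, z - J z) ∈ G) (z z' : H) :
    ‖J z - J z'‖ ≤ ‖z - z'‖ := by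
  have h1 := aux_firm G hGm J hJ z z'
  have h2 : (inner ℝ (z - z') (J z - J z') : ℝ) ≤ ‖z - z'‖ * ‖J z - J z'‖ :=
    real_inner_le_norm _ _
  rcases eq_or_lt_of_le (norm_nonneg (J z - J z')) with h | h
  · rw [← h]; exact norm_nonneg _
  · nlinarith

/-- If the resolvent `J_B` of a maximally monotone `B` is directionally differentiable
at `y`, then `B` is proto-differentiable at `x = J_B(y)` relative to `y - x`, the
resolvent of the proto-derivative is the single-valued map `h ↦ J_B'(y; h)` defined on
all of `H`, and the proto-derivative is maximally monotone. -/
theorem directional_diff_implies_proto_diff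
    [CompleteSpace H] (G : Set (H × H)) (hG : IsMaxMonotoneSet G)
    (J : H → H) (hJ : ∀ z : H, (J z, z - J z) ∈ G)
    (y : H) (x : H) (hx : x = J y)
    (D' : H → H)
    (hdiff : ∀ h : H, Tendsto (fun τ : ℝ => τ⁻¹ • (J (y + τ • h) - J y))
      (nhdsWithin 0 (Set.Ioi 0)) (nhds (D' h))) :
    ∃ D : Set (H × H),
      GraphConvTo (protoQuot G x (y - x)) D ∧
      (∀ h w : H, (w, h - w) ∈ D ↔ w = D' h) ∧
      IsMaxMonotoneSet D := by
  classical
  set q : ℝ → H → H := fun τ h => τ⁻¹ • (J (y + τ • h) - J y) with hqdef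
  -- membership characterization of protoQuot
  have hmemchar : ∀ τ : ℝ, 0 < τ → ∀ p : H × H,
      (p ∈ protoQuot G x (y - x) τ ↔ p.1 = q τ (p.1 + p.2)) := by
    intro τ hτ p
    have harg : (x + τ • p.1) + ((y - x) + τ • p.2) = y + τ • (p.1 + p.2) := by
      rw [smul_add]; abel
    unfold protoQuot
    rw [Set.mem_setOf_eq, aux_res_char G hG.1 J hJ, harg, hqdef]
    simp only
    rw [eq_comm (a := p.1), inv_smul_eq_iff₀ hτ.ne', sub_eq_iff_eq_add', hx]
  -- difference of quotients
  have hqdiff : ∀ τ : ℝ, 0 < τ → ∀ a b : H,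
      q τ a - q τ b = τ⁻¹ • (J (y + τ • a) - J (y + τ • b)) := by
    intro τ hτ a b
    rw [hqdef]; simp only
    rw [← smul_sub]; congr 1; abel
  -- nonexpansiveness of q τ
  have hqnonexp : ∀ τ : ℝ, 0 < τ → ∀ a b : H, ‖q τ a - q τ b‖ ≤ ‖a - b‖ := by
    intro τ hτ a b
    rw [hqdiff τ hτ a b, norm_smul]
    have hJne := aux_nonexp G hG.1 J hJ (y + τ • a) (y + τ • b)
    have harg : (y + τ • a) - (y + τ • b) = τ • (a - b) := by
      rw [smul_sub]; abel
    rw [harg, norm_smul] at hJne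
    calc ‖τ⁻¹‖ * ‖J (y + τ • a) - J (y + τ • b)‖
        ≤ ‖τ⁻¹‖ * (‖τ‖ * ‖a - b‖) := by
          apply mul_le_mul_of_nonneg_left hJne (norm_nonneg _)
      _ = ‖a - b‖ := by
          rw [norm_inv, Real.norm_eq_abs, abs_of_pos hτ]
          field_simp
  -- firm nonexpansiveness of q τ
  have hqfirm : ∀ τ : ℝ, 0 < τ → ∀ a b : H,
      ‖q τ a - q τ b‖^2 ≤ (inner ℝ (a - b) (q τ a - q τ b) : ℝ) := by
    intro τ hτ a b
    have hJf := aux_firm G hG.1 J hJ (y + τ • a) (y + τ • b)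
    have harg : (y + τ • a) - (y + τ • b) = τ • (a - b) := by
      rw [smul_sub]; abel
    rw [harg] at hJf
    rw [hqdiff τ hτ a b, norm_smul, real_inner_smul_right]
    rw [real_inner_smul_left] at hJf
    have hτi : (0:ℝ) < τ⁻¹ := inv_pos.mpr hτ
    rw [norm_inv, Real.norm_eq_abs, abs_of_pos hτ, mul_pow]
    have h2 : τ * (inner ℝ (a - b) (J (y + τ • a) - J (y + τ • b)) : ℝ)
        ≥ ‖J (y + τ • a) - J (y + τ • b)‖ ^ 2 := hJf
    have h3 := mul_le_mul_of_nonneg_left h2 (le_of_lt (mul_pos hτi hτi))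
    have h4 : τ⁻¹ * τ = 1 := inv_mul_cancel₀ hτ.ne'
    calc τ⁻¹ ^ 2 * ‖J (y + τ • a) - J (y + τ • b)‖ ^ 2
        = τ⁻¹ * τ⁻¹ * ‖J (y + τ • a) - J (y + τ • b)‖ ^ 2 := by ring
      _ ≤ τ⁻¹ * τ⁻¹ * (τ * inner ℝ (a - b) (J (y + τ • a) - J (y + τ • b))) := h3
      _ = (τ⁻¹ * τ) * (τ⁻¹ * inner ℝ (a - b) (J (y + τ • a) - J (y + τ • b))) := by
          ring
      _ = τ⁻¹ * inner ℝ (a - b) (J (y + τ • a) - J (y + τ • b)) := by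
          rw [h4]; ring
  -- convergence of q along positive sequences tending to 0
  have hseq : ∀ (τk : ℕ → ℝ), (∀ k, 0 < τk k) → Tendsto τk atTop (nhds 0) →
      ∀ h : H, Tendsto (fun k => q (τk k) h) atTop (nhds (D' h)) := by
    intro τk hpos hτ0 h
    exact (hdiff h).comp
      (tendsto_nhdsWithin_of_tendsto_nhds_of_eventually_within τk hτ0
        (Eventually.of_forall hpos))
  -- firm nonexpansiveness of D'
  have hDfirm : ∀ a b : H,
      ‖D' a - D' b‖^2 ≤ (inner ℝ (a - b) (D' a - D' b) : ℝ) := by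
    intro a b
    have hsub : Tendsto (fun τ => q τ a - q τ b)
        (nhdsWithin 0 (Set.Ioi 0)) (nhds (D' a - D' b)) :=
      (hdiff a).sub (hdiff b)
    have h1 : Tendsto (fun τ => ‖q τ a - q τ b‖^2)
        (nhdsWithin 0 (Set.Ioi 0)) (nhds (‖D' a - D' b‖^2)) :=
      (hsub.norm).pow 2
    have h2 : Tendsto (fun τ => (inner ℝ (a - b) (q τ a - q τ b) : ℝ))
        (nhdsWithin 0 (Set.Ioi 0)) (nhds (inner ℝ (a - b) (D' a - D' b) : ℝ)) :=
      Tendsto.inner tendsto_const_nhds hsub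
    refine le_of_tendsto_of_tendsto h1 h2 ?_
    filter_upwards [self_mem_nhdsWithin] with τ hτ
    exact hqfirm τ hτ a b
  -- the proto-derivative graph
  refine ⟨{p : H × H | p.1 = D' (p.1 + p.2)}, ?_, ?_, ?_, ?_⟩
  · constructor
    · -- inner limit
      intro p hp τk hpos hτ0
      simp only [Set.mem_setOf_eq] at hp
      set h := p.1 + p.2 with hh
      refine ⟨fun k => (q (τk k) h, h - q (τk k) h), ?_, ?_⟩
      · intro k
        rw [hmemchar (τk k) (hpos k)]
        simp only
        congr 1
        abel
      · have h1 := hseq τk hpos hτ0 h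
        have h2 : Tendsto (fun k => h - q (τk k) h) atTop (nhds (h - D' h)) :=
          tendsto_const_nhds.sub h1
        have hp1 : D' h = p.1 := hp.symm
        have hp2 : h - D' h = p.2 := by rw [hp1, hh]; abel
        rw [hp1] at h1
        rw [hp2] at h2
        exact h1.prodMk_nhds h2
    · -- outer limit
      intro τk hpos hτ0 pk hmem p hlim
      simp only [Set.mem_setOf_eq]
      set hk : ℕ → H := fun k => (pk k).1 + (pk k).2 with hhk
      set h := p.1 + p.2 with hh
      have hlim1 : Tendsto (fun k => (pk k).1) atTop (nhds p.1) :=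
        (continuous_fst.tendsto p).comp hlim
      have hlim2 : Tendsto (fun k => (pk k).2) atTop (nhds p.2) :=
        (continuous_snd.tendsto p).comp hlim
      have hhklim : Tendsto hk atTop (nhds h) := hlim1.add hlim2
      have hkey : ∀ k, (pk k).1 = q (τk k) (hk k) := by
        intro k
        exact (hmemchar (τk k) (hpos k) (pk k)).mp (hmem k)
      -- q (τk k) (hk k) → D' h
      have hql : Tendsto (fun k => q (τk k) (hk k)) atTop (nhds (D' h)) := by
        rw [tendsto_iff_norm_sub_tendsto_zero]
        have hbound : ∀ k, ‖q (τk k) (hk k) - D' h‖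
            ≤ ‖hk k - h‖ + ‖q (τk k) h - D' h‖ := by
          intro k
          calc ‖q (τk k) (hk k) - D' h‖
              ≤ ‖q (τk k) (hk k) - q (τk k) h‖ + ‖q (τk k) h - D' h‖ :=
                norm_sub_le_norm_sub_add_norm_sub _ _ _
            _ ≤ ‖hk k - h‖ + ‖q (τk k) h - D' h‖ := by
                exact add_le_add_left (hqnonexp (τk k) (hpos k) _ _) _
        have ht1 : Tendsto (fun k => ‖hk k - h‖) atTop (nhds 0) := by
          rw [← tendsto_iff_norm_sub_tendsto_zero] ; exact hhklim
        have ht2 : Tendsto (fun k => ‖q (τk k) h - D' h‖) atTop (nhds 0) := by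
          rw [← tendsto_iff_norm_sub_tendsto_zero]
          exact hseq τk hpos hτ0 h
        have : Tendsto (fun k => ‖hk k - h‖ + ‖q (τk k) h - D' h‖)
            atTop (nhds 0) := by simpa using ht1.add ht2
        exact squeeze_zero (fun k => norm_nonneg _) hbound this
      have hql' : Tendsto (fun k => (pk k).1) atTop (nhds (D' h)) := by
        simpa only [← hkey] using hql
      exact tendsto_nhds_unique hlim1 hql'
  · -- resolvent of D is D'
    intro h w
    simp only [Set.mem_setOf_eq]
    rw [show w + (h - w) = h by abel]
  · -- monotone
    intro p hp p' hp'
    simp only [Set.mem_setOf_eq] at hp hp'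
    set a := p.1 + p.2 with ha
    set b := p'.1 + p'.2 with hb
    have e1 : p.1 - p'.1 = D' a - D' b := by rw [hp, hp']
    have e2 : p.2 - p'.2 = (a - b) - (D' a - D' b) := by
      rw [← hp, ← hp', ha, hb]; abel
    rw [e1, e2, inner_sub_left, real_inner_self_eq_norm_sq]
    have := hDfirm a b
    linarith [real_inner_comm (a - b) (D' a - D' b)]
  · -- maximal
    intro G' hG'm hsub
    ext p
    constructor
    · intro hpG'
      set h := p.1 + p.2 with hh
      have hD : (D' h, h - D' h) ∈ {p : H × H | p.1 = D' (p.1 + p.2)} := by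
        simp only [Set.mem_setOf_eq]
        rw [show D' h + (h - D' h) = h by abel]
      have hmono := hG'm p hpG' (D' h, h - D' h) (hsub hD)
      simp only at hmono
      have e1 : p.2 - (h - D' h) = -(p.1 - D' h) := by rw [hh]; abel
      rw [e1, inner_neg_left] at hmono
      have hle : (inner ℝ (p.1 - D' h) (p.1 - D' h) : ℝ) ≤ 0 := by linarith
      have h0 := real_inner_self_nonneg (x := p.1 - D' h)
      have hz := le_antisymm hle h0
      have := inner_self_eq_zero.mp hz
      rw [sub_eq_zero] at this
      simpa only [Set.mem_setOf_eq, ← hh] using this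
    · intro hp
      exact hsub hp
end
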